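/- Let X be a complete metric space, f: X → ℝ∪{+∞} lower semicontinuous, x̄ ∈ [f≤0], φ ∈ C¹ concave (φ: ℝ₊ → ℝ₊, φ(0)=0, φ(t)>0 for t>0, continuously differentiable on ]0,+∞[ with φ'>0, φ(t)→+∞, and φ concave). If φ'(φ⁻¹(d(x,[f≤0])))·|∇f|(x) ≥ 1 for all x with f(x) > 0 near x̄ with f(x) near 0 (precisely: there exist δ, μ > 0 such that this holds for all x ∈ B_δ(x̄) with 0 < f(x) < μ), then f admits a local φ-error bound at x̄: there exist δ', μ' > 0 with d(x,[f≤0]) ≤ φ(f(x)) for all x ∈ B_{δ'}(x̄) with 0 < f(x) < μ'. -/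

import Mathlib

open Filter EMetric Set Topology
open scoped ENNReal NNReal

noncomputable def epos (a : EReal) : ℝ≥0∞ := if a = ⊤ then ⊤ else ENNReal.ofReal a.toReal

noncomputable def nslope {X : Type*} [MetricSpace X] (f : X → EReal) (x : X) : ℝ≥0∞ :=
  ⨆ u ∈ {u : X | u ≠ x}, epos (f x - max (f u) 0) / edist u x

noncomputable def lslope {X : Type*} [MetricSpace X] (f : X → EReal) (x : X) : ℝ≥0∞ :=
  Filter.limsup (fun u => epos (f x - f u) / edist u x) (𝓝[≠] x)

lemma ekeland_aux {X : Type*} [MetricSpace X] [CompleteSpace X]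
    (g : X → ℝ) (hg : LowerSemicontinuous g) (hg0 : ∀ u, 0 ≤ g u)
    (κ : ℝ) (hκ : 0 < κ) (x₀ : X) :
    ∃ y, g y + κ * dist y x₀ ≤ g x₀ ∧ ∀ u, g y ≤ g u + κ * dist u y := by
  set R : X → X → Prop := fun u v => g u + κ * dist u v ≤ g v with hR
  have Rrefl : ∀ u, R u u := fun u => by simp [hR]
  have Rtrans : ∀ {u v w}, R u v → R v w → R u w := by
    intro u v w h1 h2
    have ht := dist_triangle u v w
    have : κ * dist u w ≤ κ * (dist u v + dist v w) := by
      exact mul_le_mul_of_nonneg_left ht hκ.le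
    simp only [hR] at h1 h2 ⊢
    nlinarith [dist_nonneg (x := u) (y := v), dist_nonneg (x := v) (y := w)]
  have Rle : ∀ {u v}, R u v → g u ≤ g v := by
    intro u v h1
    have := mul_nonneg hκ.le (dist_nonneg (x := u) (y := v))
    simp only [hR] at h1; linarith
  have hbdd : ∀ v : X, BddBelow (g '' {w | R w v}) := by
    rintro v
    exact ⟨0, by rintro a ⟨u, _, rfl⟩; exact hg0 u⟩
  have hne : ∀ v : X, (g '' {w | R w v}).Nonempty := fun v => ⟨g v, v, Rrefl v, rfl⟩
  have hstep : ∀ (v : X) (n : ℕ), ∃ u, R u v ∧ g u ≤ sInf (g '' {w | R w v}) + (1/2)^n := by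
    intro v n
    obtain ⟨a, ⟨u, hu, rfl⟩, ha⟩ := Real.lt_sInf_add_pos (hne v) (by positivity :
      (0:ℝ) < (1/2)^n)
    exact ⟨u, hu, ha.le⟩
  set x : ℕ → X := fun n => Nat.recAux x₀ (fun n xn => Classical.choose (hstep xn n)) n with hx
  have hx0 : x 0 = x₀ := rfl
  have hxs : ∀ n, R (x (n+1)) (x n) ∧
      g (x (n+1)) ≤ sInf (g '' {w | R w (x n)}) + (1/2)^n := by
    intro n
    exact Classical.choose_spec (hstep (x n) n)
  have hchainLe : ∀ m n, n ≤ m → R (x m) (x n) := by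
    intro m n hnm
    induction m, hnm using Nat.le_induction with
    | base => exact Rrefl _
    | succ m hnm ih => exact Rtrans (hxs m).1 ih
  have gmono : ∀ m n, n ≤ m → g (x m) ≤ g (x n) := fun m n h => Rle (hchainLe m n h)
  have hbdd2 : BddBelow (Set.range fun n => g (x n)) :=
    ⟨0, by rintro a ⟨n, rfl⟩; exact hg0 _⟩
  set L : ℝ := ⨅ n, g (x n) with hL
  have htend : Tendsto (fun n => g (x n)) atTop (nhds L) :=
    tendsto_atTop_ciInf (fun a b hab => gmono b a hab) hbdd2
  have hLle : ∀ n, L ≤ g (x n) := fun n => ciInf_le hbdd2 n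
  have hcauchy : CauchySeq x := by
    rw [Metric.cauchySeq_iff']
    intro ε hε
    have : ∀ᶠ n in atTop, g (x n) < L + κ * ε := by
      apply htend.eventually_lt_const
      nlinarith
    obtain ⟨N, hN⟩ := this.exists
    refine ⟨N, fun n hn => ?_⟩
    have h1 := hchainLe n N hn
    simp only [hR] at h1
    have h2 := hLle n
    have : κ * dist (x n) (x N) < κ * ε := by linarith
    exact lt_of_mul_lt_mul_left this hκ.le
  obtain ⟨y, hy⟩ := cauchySeq_tendsto_of_complete hcauchy
  have hgyL : g y ≤ L := by
    by_contra hcon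
    push_neg at hcon
    set c := (L + g y) / 2 with hc
    have hc1 : c < g y := by rw [hc]; linarith
    have hc2 : L < c := by rw [hc]; linarith
    have hev : ∀ᶠ n in atTop, c < g (x n) := hy.eventually (hg y c hc1)
    have : c ≤ L := ge_of_tendsto htend (hev.mono fun n h => h.le)
    linarith
  have hRyx : ∀ n, R y (x n) := by
    intro n
    have htends : Tendsto (fun m => g (x m) + κ * dist (x m) (x n)) atTop
        (nhds (L + κ * dist y (x n))) :=
      htend.add (((continuous_dist.comp (Continuous.prodMk continuous_id
        continuous_const)).continuousAt.tendsto.comp hy).const_mul κ)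
    have hle : L + κ * dist y (x n) ≤ g (x n) := by
      refine le_of_tendsto htends ?_
      filter_upwards [eventually_ge_atTop n] with m hm
      exact hchainLe m n hm
    simp only [hR]
    have := mul_nonneg hκ.le (dist_nonneg (x := y) (y := x n))
    linarith
  refine ⟨y, by simpa [hx0] using hRyx 0, fun u => ?_⟩
  by_cases hRu : R u y
  · have hun : ∀ n, R u (x n) := fun n => Rtrans hRu (hRyx n)
    have hkey : ∀ n, g (x (n+1)) - (1/2)^n ≤ g u := by
      intro n
      have h1 := (hxs n).2
      have h2 : sInf (g '' {w | R w (x n)}) ≤ g u :=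
        csInf_le (hbdd _) ⟨u, hun n, rfl⟩
      linarith
    have hLu : L ≤ g u := by
      have h1 : Tendsto (fun n => g (x (n+1)) - (1/2)^n) atTop (nhds (L - 0)) :=
        (htend.comp (tendsto_add_atTop_nat 1)).sub
          (tendsto_pow_atTop_nhds_zero_of_lt_one (by norm_num) (by norm_num))
      simpa using le_of_tendsto h1 (Filter.Eventually.of_forall hkey)
    have := mul_nonneg hκ.le (dist_nonneg (x := u) (y := y))
    linarith
  · simp only [hR, not_le] at hRu
    linarith

lemma phi_strictMono (φ φ' : ℝ → ℝ) (hφ00 : φ 0 = 0) (hφpos : ∀ t > (0:ℝ), 0 < φ t)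
    (hder : ∀ t > (0:ℝ), HasDerivAt φ (φ' t) t) (hd : ∀ t > (0:ℝ), 0 < φ' t) :
    StrictMonoOn φ (Set.Ici 0) := by
  intro a ha b hb hab
  rcases eq_or_lt_of_le (Set.mem_Ici.mp ha : (0:ℝ) ≤ a) with rfl | ha'
  · rw [hφ00]; exact hφpos b hab
  · have hsm : StrictMonoOn φ (Set.Ici a) := by
      apply strictMonoOn_of_deriv_pos (convex_Ici a)
      · intro t ht
        exact (hder t (lt_of_lt_of_le ha' ht)).continuousAt.continuousWithinAt
      · intro t ht
        rw [interior_Ici] at ht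
        rw [(hder t (ha'.trans ht)).deriv]
        exact hd t (ha'.trans ht)
    exact hsm self_mem_Ici hab.le hab

theorem local_phi_error_bound_alternative {X : Type*} [MetricSpace X] [CompleteSpace X]
    (f : X → EReal) (hbot : ∀ u, f u ≠ ⊥) (hlsc : LowerSemicontinuous f)
    (xb : X) (hxb : f xb ≤ 0)
    (φ φ' ψ : ℝ → ℝ) (hφ00 : φ 0 = 0) (hφpos : ∀ t > (0 : ℝ), 0 < φ t)
    (hder : ∀ t > (0 : ℝ), HasDerivAt φ (φ' t) t)
    (hcont : ContinuousOn φ' (Set.Ioi (0 : ℝ))) (hd : ∀ t > (0 : ℝ), 0 < φ' t)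
    (htop : Filter.Tendsto φ Filter.atTop Filter.atTop)
    (hconc : ConcaveOn ℝ (Set.Ici (0 : ℝ)) φ)
    (hψ1 : ∀ t ≥ (0 : ℝ), ψ (φ t) = t) (hψ2 : ∀ t ≥ (0 : ℝ), φ (ψ t) = t)
    (h : ∃ δ > (0 : ℝ), ∃ μ > (0 : ℝ), ∀ x ∈ EMetric.ball xb (ENNReal.ofReal δ),
      0 < f x → f x < (μ : EReal) →
      1 ≤ ENNReal.ofReal (φ' (ψ (EMetric.infEdist x {v | f v ≤ 0}).toReal)) * lslope f x) :
    ∃ δ' > (0 : ℝ), ∃ μ' > (0 : ℝ), ∀ x ∈ EMetric.ball xb (ENNReal.ofReal δ'),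
      0 < f x → f x < (μ' : EReal) →
      EMetric.infEdist x {v | f v ≤ 0} ≤ ENNReal.ofReal (φ (f x).toReal) := by
  obtain ⟨δ, hδ, μ, hμ, hcrit⟩ := h
  have hxbS : xb ∈ {v : X | f v ≤ 0} := hxb
  have hmono : StrictMonoOn φ (Set.Ici 0) := phi_strictMono φ φ' hφ00 hφpos hder hd
  have hφnonneg : ∀ t, 0 ≤ t → 0 ≤ φ t := by
    intro t ht
    rcases eq_or_lt_of_le ht with rfl | h'
    · simp [hφ00]
    · exact (hφpos t h').le
  -- auxiliary facts about EReal coercions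
  have hlt_iff : ∀ (c : ℝ) (z : EReal), z ≠ ⊤ → z ≠ ⊥ → ((c:EReal) < z ↔ c < z.toReal) := by
    intro c z h1 h2
    conv_lhs => rw [← EReal.coe_toReal h1 h2]
    exact EReal.coe_lt_coe_iff
  -- the truncated function
  set F : X → ℝ := fun u => ((f u ⊓ (μ:EReal)) ⊔ 0).toReal with hFdef
  have hzle : ∀ u, (f u ⊓ (μ:EReal)) ⊔ 0 ≤ (μ:EReal) :=
    fun u => sup_le inf_le_right (by exact_mod_cast hμ.le)
  have hztop : ∀ u, (f u ⊓ (μ:EReal)) ⊔ 0 ≠ ⊤ :=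
    fun u => ne_top_of_le_ne_top (EReal.coe_ne_top μ) (hzle u)
  have hzbot : ∀ u, (f u ⊓ (μ:EReal)) ⊔ 0 ≠ ⊥ := by
    intro u
    refine ne_bot_of_le_ne_bot ?_ le_sup_right
    simp
  have hF0 : ∀ u, 0 ≤ F u := by
    intro u
    have := EReal.toReal_le_toReal (le_sup_right : (0:EReal) ≤ (f u ⊓ (μ:EReal)) ⊔ 0)
      (by simp) (hztop u)
    simpa using this
  have hFμ : ∀ u, F u ≤ μ := by
    intro u
    have := EReal.toReal_le_toReal (hzle u) (hzbot u) (EReal.coe_ne_top μ)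
    simpa using this
  have hFeq : ∀ u, 0 < f u → f u < (μ:EReal) → F u = (f u).toReal := by
    intro u h1 h2
    simp only [hFdef]
    rw [inf_eq_left.mpr h2.le, sup_eq_left.mpr h1.le]
  -- F is lower semicontinuous
  have hlscF : LowerSemicontinuous F := by
    intro x c hc
    rcases lt_or_ge c 0 with hc0 | hc0
    · filter_upwards with u
      exact lt_of_lt_of_le hc0 (hF0 u)
    · have h1 : (c:EReal) < (f x ⊓ (μ:EReal)) ⊔ 0 :=
        (hlt_iff c _ (hztop x) (hzbot x)).mpr hc
      have hcz : (c:EReal) < f x ⊓ (μ:EReal) := by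
        rcases lt_sup_iff.mp h1 with h | h
        · exact h
        · exact absurd h (by exact_mod_cast not_lt.2 hc0)
      have hev := hlsc x c (lt_of_lt_of_le hcz inf_le_left)
      filter_upwards [hev] with u hu
      have : (c:EReal) < (f u ⊓ (μ:EReal)) ⊔ 0 :=
        lt_sup_iff.mpr (Or.inl (lt_inf_iff.mpr ⟨hu, lt_of_lt_of_le hcz inf_le_right⟩))
      exact (hlt_iff c _ (hztop u) (hzbot u)).mp this
  -- the composed function is lower semicontinuous
  have hlscg : LowerSemicontinuous (fun u => φ (F u)) := by
    intro x c hc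
    rcases eq_or_lt_of_le (hF0 x) with h0 | h0
    · have hc' : c < φ (F x) := hc
      have hcneg : c < 0 := by rwa [← h0, hφ00] at hc'
      filter_upwards with u
      exact lt_of_lt_of_le hcneg (hφnonneg _ (hF0 u))
    · have hcont' : ContinuousAt φ (F x) := (hder _ h0).continuousAt
      have hev : ∀ᶠ t in nhds (F x), c < φ t := hcont'.eventually (lt_mem_nhds hc)
      have hev2 : ∀ᶠ t in nhdsWithin (F x) (Set.Iio (F x)), c < φ t ∧ 0 < t := by
        filter_upwards [nhdsWithin_le_nhds hev,
          nhdsWithin_le_nhds (eventually_gt_nhds h0)] with t h1 h2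
        exact ⟨h1, h2⟩
      obtain ⟨s, ⟨hs1, hs2⟩, hs3⟩ := (hev2.and self_mem_nhdsWithin).exists
      have hsF : s < F x := hs3
      filter_upwards [hlscF x s hsF] with u hu
      exact lt_of_lt_of_le hs1 (hmono.monotoneOn (le_of_lt hs2) (hF0 u) hu.le)
  refine ⟨δ/2, by positivity, μ, hμ, fun x hxball hfx0 hfxμ => ?_⟩
  by_contra hcon
  push_neg at hcon
  -- basic facts about x
  have hfxtop : f x ≠ ⊤ := ne_top_of_lt hfxμ
  set A0 : ℝ := (f x).toReal with hA0def
  have hA0 : (A0 : EReal) = f x := EReal.coe_toReal hfxtop (hbot x)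
  have hA0pos : 0 < A0 := by
    have := (hlt_iff 0 (f x) hfxtop (hbot x)).mp (by exact_mod_cast hfx0)
    simpa using this
  have hA0μ : A0 < μ := by
    have : f x < ((μ:ℝ) : EReal) := hfxμ
    rw [← hA0] at this
    exact_mod_cast this
  have hdxtop : EMetric.infEdist x {v : X | f v ≤ 0} ≠ ⊤ :=
    Metric.infEdist_ne_top ⟨xb, hxbS⟩
  set dxr : ℝ := (EMetric.infEdist x {v : X | f v ≤ 0}).toReal with hdxrdef
  have hφA0dx : φ A0 < dxr :=
    (ENNReal.ofReal_lt_iff_lt_toReal (hφpos A0 hA0pos).le hdxtop).mp hcon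
  have hdxδ : dxr < δ/2 := by
    have h1 : EMetric.infEdist x {v : X | f v ≤ 0} < ENNReal.ofReal (δ/2) :=
      lt_of_le_of_lt (EMetric.infEdist_le_edist_of_mem hxbS) hxball
    exact ENNReal.toReal_lt_of_lt_ofReal h1
  set lam : ℝ := (φ A0 + dxr)/2 with hlamdef
  have hlam1 : φ A0 < lam := by rw [hlamdef]; linarith
  have hlam2 : lam < dxr := by rw [hlamdef]; linarith
  have hlam0 : 0 < lam := lt_of_le_of_lt (hφpos A0 hA0pos).le hlam1
  have hlamδ : lam < δ/2 := lt_trans hlam2 hdxδ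
  set κ : ℝ := φ A0 / lam with hκdef
  have hκ0 : 0 < κ := div_pos (hφpos A0 hA0pos) hlam0
  have hκ1 : κ < 1 := (div_lt_one hlam0).mpr hlam1
  have hκlam : κ * lam = φ A0 := div_mul_cancel₀ _ hlam0.ne'
  -- apply the Ekeland-type lemma
  obtain ⟨y, hy1, hy2⟩ := ekeland_aux (fun u => φ (F u)) hlscg
    (fun u => hφnonneg _ (hF0 u)) κ hκ0 x
  have hFx : F x = A0 := hFeq x hfx0 hfxμ
  rw [hFx] at hy1
  -- distance estimates
  have hdyx : dist y x ≤ lam := by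
    have h1 : κ * dist y x ≤ φ A0 := by
      have := hφnonneg _ (hF0 y); linarith
    rw [← hκlam] at h1
    exact le_of_mul_le_mul_left h1 hκ0
  have hdytop : EMetric.infEdist y {v : X | f v ≤ 0} ≠ ⊤ :=
    Metric.infEdist_ne_top ⟨xb, hxbS⟩
  set dyr : ℝ := (EMetric.infEdist y {v : X | f v ≤ 0}).toReal with hdyrdef
  have hdxy_real : dxr ≤ dyr + dist x y := by
    have h1 : EMetric.infEdist x {v : X | f v ≤ 0} ≤
        EMetric.infEdist y {v : X | f v ≤ 0} + edist x y :=
      EMetric.infEdist_le_infEdist_add_edist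
    have h2 := ENNReal.toReal_mono (by
      refine ENNReal.add_ne_top.mpr ⟨hdytop, ?_⟩
      exact edist_ne_top x y) h1
    rw [ENNReal.toReal_add hdytop (edist_ne_top x y)] at h2
    rw [← hdxrdef, ← hdyrdef] at h2
    simpa [edist_dist, ENNReal.toReal_ofReal dist_nonneg] using h2
  have hdist_sym : dist x y = dist y x := dist_comm x y
  have hdyr_lb : dxr - dist y x ≤ dyr := by
    rw [← hdist_sym]; linarith
  have hdyr_pos : 0 < dyr := by linarith
  -- y is not in the null set, thus f y > 0
  have hynS : y ∉ {v : X | f v ≤ 0} := by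
    intro hy
    have := EMetric.infEdist_zero_of_mem hy
    rw [hdyrdef, show EMetric.infEdist y {v : X | f v ≤ 0} = 0 from this] at hdyr_pos
    simp at hdyr_pos
  have hfy0 : 0 < f y := lt_of_not_ge hynS
  -- f y < μ
  have hFyA0 : F y ≤ A0 := by
    by_contra hconF
    push_neg at hconF
    have := hmono (Set.mem_Ici.mpr hA0pos.le) (Set.mem_Ici.mpr (hF0 y)) hconF
    have h2 : κ * dist y x ≥ 0 := mul_nonneg hκ0.le dist_nonneg
    linarith
  have hfyμ : f y < (μ : EReal) := by
    by_contra hconμ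
    push_neg at hconμ
    have hz : (f y ⊓ (μ:EReal)) ⊔ 0 = (μ:EReal) := by
      rw [inf_eq_right.mpr hconμ, sup_eq_left.mpr (by exact_mod_cast hμ.le : (0:EReal) ≤ (μ:EReal))]
    have : F y = μ := by rw [hFdef]; simp only []; rw [hz]; exact EReal.toReal_coe μ
    linarith
  have hfytop : f y ≠ ⊤ := ne_top_of_lt hfyμ
  set A : ℝ := (f y).toReal with hAdef
  have hA : (A : EReal) = f y := EReal.coe_toReal hfytop (hbot y)
  have hApos : 0 < A := by
    have := (hlt_iff 0 (f y) hfytop (hbot y)).mp (by exact_mod_cast hfy0)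
    simpa using this
  have hFy : F y = A := hFeq y hfy0 hfyμ
  rw [hFy] at hy1 hy2
  -- φ A ≤ κ (lam - dist y x)
  have hy1' : φ A ≤ κ * (lam - dist y x) := by
    rw [mul_sub, hκlam]; linarith
  have hdyx_lt : dist y x < lam := by
    by_contra hcd
    push_neg at hcd
    have : κ * (lam - dist y x) ≤ 0 := mul_nonpos_of_nonneg_of_nonpos hκ0.le (by linarith)
    have := hφpos A hApos
    linarith
  have hφA_dyr : φ A < dyr := by
    have h1 : κ * (lam - dist y x) < lam - dist y x := by
      nlinarith
    have h2 : lam - dist y x < dxr - dist y x := by linarith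
    linarith
  -- y is in the ball of radius δ
  have hyball : y ∈ EMetric.ball xb (ENNReal.ofReal δ) := by
    have hx2 : dist x xb < δ/2 := by
      have := hxball
      change edist x xb < ENNReal.ofReal (δ/2) at this
      rw [edist_lt_ofReal] at this
      exact this
    have : dist y xb < δ := by
      have := dist_triangle y x xb
      linarith
    change edist y xb < ENNReal.ofReal δ
    rw [edist_lt_ofReal]
    exact this
  have hcy := hcrit y hyball hfy0 hfyμ
  -- find s with φ s = dyr via the intermediate value theorem
  obtain ⟨M, hM1, hM2⟩ := ((htop.eventually_ge_atTop dyr).and (eventually_ge_atTop A)).exists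
  have hcontOn : ContinuousOn φ (Set.Icc A M) := fun t ht =>
    ((hder t (lt_of_lt_of_le hApos ht.1)).continuousAt).continuousWithinAt
  have hsub := intermediate_value_Icc hM2 hcontOn
  obtain ⟨s, hsIcc, hφs⟩ := hsub ⟨hφA_dyr.le, hM1⟩
  have hsA : A < s := by
    rcases eq_or_lt_of_le hsIcc.1 with rfl | h'
    · exact absurd hφs (by linarith)
    · exact h'
  have hs0 : 0 < s := lt_trans hApos hsA
  have hψs : ψ dyr = s := by rw [← hφs, hψ1 s hs0.le]
  -- φ' s ≤ φ' A by concavity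
  have hφ'sA : φ' s ≤ φ' A := by
    have h1 : φ' s ≤ slope φ A s :=
      hconc.le_slope_of_hasDerivAt (Set.mem_Ici.mpr hApos.le)
        (Set.mem_Ici.mpr hs0.le) hsA (hder s hs0)
    have h2 : slope φ A s ≤ φ' A :=
      hconc.slope_le_of_hasDerivAt (Set.mem_Ici.mpr hApos.le)
        (Set.mem_Ici.mpr hs0.le) hsA (hder A hApos)
    linarith
  have hφ'A : 0 < φ' A := hd A hApos
  -- bound the limiting slope of f at y
  have hlslope : lslope f y ≤ ENNReal.ofReal (κ / φ' A) := by
    apply Filter.limsup_le_of_le (by isBoundedDefault)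
    have hev : ∀ᶠ u in nhdsWithin y {y}ᶜ, 0 < f u :=
      nhdsWithin_le_nhds (hlsc y 0 hfy0)
    filter_upwards [hev, self_mem_nhdsWithin] with u hu hune
    rcases le_or_gt (f y) (f u) with hc | hc
    · -- the slope is zero
      have : epos (f y - f u) = 0 := by
        by_cases hfu : f u = ⊤
        · rw [hfu, EReal.sub_top, epos, if_neg (by simp), EReal.toReal_bot]
          simp
        · set B : ℝ := (f u).toReal with hBdef
          have hB : (B : EReal) = f u := EReal.coe_toReal hfu (hbot u)
          have hAB : A ≤ B := by
            rw [← hA, ← hB] at hc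
            exact_mod_cast hc
          rw [← hA, ← hB, ← EReal.coe_sub, epos, if_neg (EReal.coe_ne_top _),
            EReal.toReal_coe]
          exact ENNReal.ofReal_eq_zero.mpr (by linarith)
      rw [this]
      simp
    · -- 0 < f u < f y
      have hutop : f u ≠ ⊤ := ne_top_of_lt hc
      set B : ℝ := (f u).toReal with hBdef
      have hB : (B : EReal) = f u := EReal.coe_toReal hutop (hbot u)
      have hBpos : 0 < B := by
        have := (hlt_iff 0 (f u) hutop (hbot u)).mp (by exact_mod_cast hu)
        simpa using this
      have hBA : B < A := by
        have : f u < f y := hc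
        rw [← hB, ← hA] at this
        exact_mod_cast this
      have hFu : F u = B := hFeq u hu (lt_trans hc hfyμ)
      have hyu := hy2 u
      rw [hFu] at hyu
      -- concavity gives φ' A (A - B) ≤ φ A - φ B
      have hslopeAB : φ' A ≤ slope φ B A :=
        hconc.le_slope_of_hasDerivAt (Set.mem_Ici.mpr hBpos.le)
          (Set.mem_Ici.mpr hApos.le) hBA (hder A hApos)
      have hABpos : 0 < A - B := by linarith
      have hkey : φ' A * (A - B) ≤ φ A - φ B := by
        have := hslopeAB
        rw [slope_def_field] at this
        calc φ' A * (A - B) ≤ (φ A - φ B) / (A - B) * (A - B) := by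
              apply mul_le_mul_of_nonneg_right this hABpos.le
          _ = φ A - φ B := div_mul_cancel₀ _ hABpos.ne'
      have hmain : A - B ≤ κ / φ' A * dist u y := by
        rw [div_mul_eq_mul_div, le_div_iff₀ hφ'A]
        have hcomm : (A - B) * φ' A = φ' A * (A - B) := mul_comm _ _
        linarith
      -- translate to ℝ≥0∞
      have hval : epos (f y - f u) = ENNReal.ofReal (A - B) := by
        rw [← hA, ← hB, ← EReal.coe_sub, epos, if_neg (EReal.coe_ne_top _), EReal.toReal_coe]
      rw [hval, edist_dist]
      apply ENNReal.div_le_of_le_mul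
      rw [← ENNReal.ofReal_mul (by positivity)]
      exact ENNReal.ofReal_le_ofReal hmain
  -- derive the contradiction
  rw [← hdyrdef, hψs] at hcy
  have hfinal : (1 : ℝ≥0∞) ≤ ENNReal.ofReal κ := by
    calc (1:ℝ≥0∞) ≤ ENNReal.ofReal (φ' s) * lslope f y := hcy
      _ ≤ ENNReal.ofReal (φ' s) * ENNReal.ofReal (κ / φ' A) := by
          exact mul_le_mul_right hlslope _
      _ = ENNReal.ofReal (φ' s * (κ / φ' A)) := (ENNReal.ofReal_mul (hd s hs0).le).symm
      _ ≤ ENNReal.ofReal κ := by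
          apply ENNReal.ofReal_le_ofReal
          rw [mul_div_assoc']
          rw [div_le_iff₀ hφ'A]
          have h1 : φ' s * κ ≤ φ' A * κ := mul_le_mul_of_nonneg_right hφ'sA hκ0.le
          have h2 : φ' A * κ = κ * φ' A := mul_comm _ _
          linarith
  have : (1:ℝ≥0∞) < 1 := lt_of_le_of_lt hfinal (ENNReal.ofReal_lt_one.mpr hκ1)
  exact lt_irrefl _ this
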